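/- Let G be a split, semisimple, simply connected algebraic group of rank r over a field k, with split maximal torus T and Weyl group W. Then the fundamental characters b₁,…,b_r (traces of the fundamental representations) are algebraically independent over k and the quotient T/W is isomorphic to affine space: T/W ≅ Spec k[b₁,…,b_r]. -/

import Mathlib

open AddMonoidAlgebra

namespace Stmt6Aux

variable {k : Type*} [Field k] {G : Type*} [AddCommGroup G] (F : G →+ ℚ)

/-- `x` has "leading term" `single p 1` with respect to the functional `F`. -/
def Led (x : AddMonoidAlgebra k G) (p : G) : Prop :=
  x.coeff p = 1 ∧ ∀ lam, x.coeff lam ≠ 0 → F lam ≤ F p ∧ (F lam = F p → lam = p)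

theorem Led.one : Led F (1 : AddMonoidAlgebra k G) 0 := by
  constructor
  · simp [AddMonoidAlgebra.one_def]
  · intro lam h
    have : lam = 0 := by
      by_contra hne
      exact h (by simp [AddMonoidAlgebra.one_def, Finsupp.single_apply, Ne.symm hne])
    subst this; simp

theorem Led.mul {x y : AddMonoidAlgebra k G} {p q : G} (hx : Led F x p) (hy : Led F y q) :
    Led F (x * y) (p + q) := by
  classical
  constructor
  · rw [AddMonoidAlgebra.mul_apply]
    rw [Finsupp.sum]
    rw [Finset.sum_eq_single p]
    · rw [Finsupp.sum, Finset.sum_eq_single q]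
      · simp [hx.1, hy.1]
      · intro b hb hbq
        have hyb : y.coeff b ≠ 0 := Finsupp.mem_support_iff.mp hb
        rw [if_neg]
        intro hpb
        have hfb : F b = F q := by
          have := congrArg F hpb
          rw [map_add, map_add] at this
          linarith
        exact hbq ((hy.2 b hyb).2 hfb)
      · intro h
        have : y.coeff q = 0 := Finsupp.notMem_support_iff.mp h
        rw [hy.1] at this; exact absurd this one_ne_zero
    · intro a haSup hap
      have hxa : x.coeff a ≠ 0 := Finsupp.mem_support_iff.mp haSup
      apply Finset.sum_eq_zero
      intro b hb
      have hyb : y.coeff b ≠ 0 := Finsupp.mem_support_iff.mp hb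
      show (if a + b = p + q then x.coeff a * y.coeff b else 0) = 0
      rw [if_neg]
      intro hab
      have h1 : F a ≤ F p := (hx.2 a hxa).1
      have h2 : F b ≤ F q := (hy.2 b hyb).1
      have : F a + F b = F p + F q := by
        have := congrArg F hab; rwa [map_add, map_add] at this
      have hfa : F a = F p := by linarith
      exact hap ((hx.2 a hxa).2 hfa)
    · intro h
      have : x.coeff p = 0 := Finsupp.notMem_support_iff.mp h
      rw [hx.1] at this; exact absurd this one_ne_zero
  · intro lam hlam
    have hmem : lam ∈ (x * y).coeff.support := Finsupp.mem_support_iff.mpr hlam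
    have := AddMonoidAlgebra.support_coeff_mul_subset x y hmem
    rw [Finset.mem_add] at this
    obtain ⟨α, hα, β, hβ, rfl⟩ := this
    have hxa : x.coeff α ≠ 0 := Finsupp.mem_support_iff.mp hα
    have hyb : y.coeff β ≠ 0 := Finsupp.mem_support_iff.mp hβ
    have h1 := hx.2 α hxa
    have h2 := hy.2 β hyb
    rw [map_add, map_add]
    constructor
    · linarith [h1.1, h2.1]
    · intro heq
      have hfa : F α = F p := by linarith [h1.1, h2.1]
      have hfb : F β = F q := by linarith [h1.1, h2.1]
      rw [h1.2 hfa, h2.2 hfb]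

theorem Led.pow {x : AddMonoidAlgebra k G} {p : G} (hx : Led F x p) (n : ℕ) :
    Led F (x ^ n) (n • p) := by
  induction n with
  | zero => simpa using Led.one F
  | succ m ih =>
    rw [pow_succ, succ_nsmul]
    exact ih.mul F hx

theorem Led.prod {ι : Type*} (t : Finset ι) (f : ι → AddMonoidAlgebra k G) (p : ι → G)
    (h : ∀ i ∈ t, Led F (f i) (p i)) :
    Led F (∏ i ∈ t, f i) (∑ i ∈ t, p i) := by
  classical
  induction t using Finset.induction_on with
  | empty => simpa using Led.one F
  | insert _ _ hnotmem ih =>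
    rw [Finset.prod_insert hnotmem, Finset.sum_insert hnotmem]
    exact (h _ (Finset.mem_insert_self _ _)).mul F (ih fun i hi => h i (Finset.mem_insert_of_mem hi))


theorem exists_d
    {r : ℕ} (a : Fin r → (Fin r → ℤ)) (ha : ∀ i, a i i = 2)
    (s : Fin r → AddAut (Fin r → ℤ))
    (hs : ∀ (j : Fin r) (lam : Fin r → ℤ), s j lam = lam - lam j • a j)
    (W : AddSubgroup (AddAut (Fin r → ℤ)))
    (hW : W = AddSubgroup.closure (Set.range s))
    (wt : Fin r → ((Fin r → ℤ) →₀ ℕ))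
    (hinv : ∀ g ∈ W, ∀ (i : Fin r) (lam : Fin r → ℤ), wt i (g lam) = wt i lam)
    (hhw : ∀ i, wt i (Pi.single i 1) = 1)
    (hhw' : ∀ (i : Fin r) (lam : Fin r → ℤ), wt i lam ≠ 0 →
        ∃ c : Fin r → ℕ, ∀ j, (Pi.single i 1 : Fin r → ℤ) j - lam j = ∑ m, (c m : ℤ) * a m j)
    (i : Fin r) :
    ∃ (N : ℕ) (d : Fin r → ℕ), 0 < N ∧ 0 < ∑ m, d m ∧
      ∀ j, (N : ℤ) * (Pi.single i 1 : Fin r → ℤ) j = ∑ m, (d m : ℤ) * a m j := by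
  classical
  have hsW : ∀ j, s j ∈ W := fun j => hW ▸ AddSubgroup.subset_closure ⟨j, rfl⟩
  have hwts : ∀ (j : Fin r) (lam : Fin r → ℤ), wt i (s j lam) = wt i lam :=
    fun j lam => hinv (s j) (hsW j) i lam
  set S := (wt i).support with hS
  set v : Fin r → ℤ := ∑ lam ∈ S, (wt i lam : ℤ) • lam with hv
  -- reindexing identity
  have hre : ∀ j : Fin r, ∑ lam ∈ S, (wt i lam : ℤ) • (s j lam) = v := by
    intro j
    rw [hv]
    apply Finset.sum_equiv (s j).toEquiv
    · intro lam
      simp only [hS, Finsupp.mem_support_iff]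
      constructor
      · intro h h2
        rw [show ((s j).toEquiv lam) = s j lam from rfl, hwts j lam] at h2
        exact h h2
      · intro h h2
        rw [show ((s j).toEquiv lam) = s j lam from rfl, hwts j lam] at h
        exact h h2
    · intro lam _
      rw [show ((s j).toEquiv lam) = s j lam from rfl, hwts j lam]
  have hvj : ∀ j : Fin r, ∑ lam ∈ S, (wt i lam : ℤ) * lam j = 0 := by
    intro j
    have h1 : ∑ lam ∈ S, (wt i lam : ℤ) • (s j lam)
        = v - (∑ lam ∈ S, (wt i lam : ℤ) * lam j) • a j := by
      rw [hv]
      calc ∑ lam ∈ S, (wt i lam : ℤ) • (s j lam)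
          = ∑ lam ∈ S, ((wt i lam : ℤ) • lam - ((wt i lam : ℤ) * lam j) • a j) :=
            Finset.sum_congr rfl (fun lam _ => by rw [hs j lam, smul_sub, smul_smul])
        _ = (∑ lam ∈ S, (wt i lam : ℤ) • lam) - (∑ lam ∈ S, (wt i lam : ℤ) * lam j) • a j := by
            rw [Finset.sum_sub_distrib, Finset.sum_smul]
    have h2 : (∑ lam ∈ S, (wt i lam : ℤ) * lam j) • a j = 0 := by
      have := (hre j).symm.trans h1
      have := sub_eq_self.mp this.symm
      exact this
    have h3 := congrFun h2 j
    simp only [Pi.smul_apply, smul_eq_mul, Pi.zero_apply, ha j] at h3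
    linarith
  set N := ∑ lam ∈ S, wt i lam with hNdef
  have hμS : Pi.single i 1 ∈ S := by
    rw [hS, Finsupp.mem_support_iff, hhw i]; exact one_ne_zero
  have hN : 0 < N := by
    rw [hNdef]
    have h2 := Finset.single_le_sum (f := fun lam => wt i lam) (fun _ _ => Nat.zero_le _) hμS
    simp only [hhw i] at h2
    omega
  have h0 : ∀ lam ∈ S, ∃ cc : Fin r → ℕ,
      ∀ j, (Pi.single i 1 : Fin r → ℤ) j - lam j = ∑ m, (cc m : ℤ) * a m j :=
    fun lam hlam => hhw' i lam (Finsupp.mem_support_iff.mp hlam)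
  choose! c hcspec using h0
  have hd : ∀ j, (N : ℤ) * (Pi.single i 1 : Fin r → ℤ) j
      = ∑ m, ((∑ lam ∈ S, wt i lam * c lam m : ℕ) : ℤ) * a m j := by
    intro j
    have step : ∑ m, ((∑ lam ∈ S, wt i lam * c lam m : ℕ) : ℤ) * a m j
        = ∑ lam ∈ S, (wt i lam : ℤ) * ((Pi.single i 1 : Fin r → ℤ) j - lam j) := by
      push_cast
      calc ∑ m, (∑ lam ∈ S, (wt i lam : ℤ) * (c lam m : ℤ)) * a m j
          = ∑ m, ∑ lam ∈ S, (wt i lam : ℤ) * (c lam m : ℤ) * a m j := by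
            apply Finset.sum_congr rfl; intro m _; exact Finset.sum_mul _ _ _
        _ = ∑ lam ∈ S, ∑ m, (wt i lam : ℤ) * (c lam m : ℤ) * a m j := Finset.sum_comm
        _ = ∑ lam ∈ S, (wt i lam : ℤ) * ∑ m, (c lam m : ℤ) * a m j := by
            apply Finset.sum_congr rfl; intro lam _
            rw [Finset.mul_sum]
            apply Finset.sum_congr rfl; intro m _; ring
        _ = ∑ lam ∈ S, (wt i lam : ℤ) * ((Pi.single i 1 : Fin r → ℤ) j - lam j) := by
            apply Finset.sum_congr rfl; intro lam hlam; rw [hcspec lam hlam j]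
    have final : ∑ lam ∈ S, (wt i lam : ℤ) * ((Pi.single i 1 : Fin r → ℤ) j - lam j)
        = (N : ℤ) * (Pi.single i 1 : Fin r → ℤ) j := by
      have e1 : ∑ lam ∈ S, (wt i lam : ℤ) * ((Pi.single i 1 : Fin r → ℤ) j - lam j)
          = (∑ lam ∈ S, (wt i lam : ℤ)) * (Pi.single i 1 : Fin r → ℤ) j
            - ∑ lam ∈ S, (wt i lam : ℤ) * lam j := by
        rw [Finset.sum_mul, ← Finset.sum_sub_distrib]
        apply Finset.sum_congr rfl; intro lam _; ring
      rw [e1, hvj j, sub_zero, hNdef]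
      push_cast
      ring
    rw [step, final]
  refine ⟨N, fun m => ∑ lam ∈ S, wt i lam * c lam m, hN, ?_, fun j => hd j⟩
  by_contra hzero
  push_neg at hzero
  have hsum0 : ∑ m, ∑ lam ∈ S, wt i lam * c lam m = 0 := Nat.le_zero.mp hzero
  have hall : ∀ m, (∑ lam ∈ S, wt i lam * c lam m) = 0 := by
    intro m
    exact (Finset.sum_eq_zero_iff.mp hsum0) m (Finset.mem_univ m)
  have hdi := hd i
  rw [Pi.single_eq_same] at hdi
  simp only [hall, Nat.cast_zero, zero_mul, Finset.sum_const_zero, mul_one] at hdi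
  omega


theorem exists_functional
    {r : ℕ} (a : Fin r → (Fin r → ℤ))
    (hDat : ∀ i : Fin r, ∃ (N : ℕ) (d : Fin r → ℕ), 0 < N ∧ 0 < ∑ m, d m ∧
      ∀ j, (N : ℤ) * (Pi.single i 1 : Fin r → ℤ) j = ∑ m, (d m : ℤ) * a m j) :
    ∃ f : (Fin r → ℤ) →+ ℚ, (∀ m, f (a m) = 1) ∧ (∀ i, 0 < f (Pi.single i 1)) := by
  classical
  set A' : Fin r → (Fin r → ℚ) := fun m j => (a m j : ℚ) with hA'
  have hcast : ∀ i : Fin r, (fun j => ((Pi.single i 1 : Fin r → ℤ) j : ℚ)) = Pi.single i 1 := by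
    intro i; funext j
    by_cases h : j = i
    · subst h; simp
    · simp [Pi.single_eq_of_ne h]
  have hkey : ∀ i : Fin r, ∃ (N : ℕ) (d : Fin r → ℕ), 0 < N ∧ 0 < ∑ m, d m ∧
      (N : ℚ) • (Pi.single i 1 : Fin r → ℚ) = ∑ m, (d m : ℚ) • A' m := by
    intro i
    obtain ⟨N, d, hN, hD, hEq⟩ := hDat i
    refine ⟨N, d, hN, hD, ?_⟩
    funext j
    have := hEq j
    have h2 := congrArg (Int.cast : ℤ → ℚ) this
    push_cast at h2
    simp only [Pi.smul_apply, smul_eq_mul, Finset.sum_apply]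
    rw [← congrFun (hcast i) j, h2]
  have hE : ∀ i : Fin r, (Pi.single i 1 : Fin r → ℚ) ∈ Submodule.span ℚ (Set.range A') := by
    intro i
    obtain ⟨N, d, hN, _, hEq⟩ := hkey i
    have hNq : (N : ℚ) ≠ 0 := by positivity
    have : (Pi.single i 1 : Fin r → ℚ) = (N : ℚ)⁻¹ • ∑ m, (d m : ℚ) • A' m := by
      rw [← hEq, smul_smul, inv_mul_cancel₀ hNq, one_smul]
    rw [this]
    exact Submodule.smul_mem _ _ (Submodule.sum_mem _ fun m _ =>
      Submodule.smul_mem _ _ (Submodule.subset_span ⟨m, rfl⟩))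
  have hspan : ⊤ ≤ Submodule.span ℚ (Set.range A') := by
    intro v _
    have hv : v = ∑ i, (v i) • (Pi.single i 1 : Fin r → ℚ) := by
      funext j
      simp [Finset.sum_apply, Pi.single_apply]
    rw [hv]
    exact Submodule.sum_mem _ fun i _ => Submodule.smul_mem _ _ (hE i)
  have hcard : Fintype.card (Fin r) = Module.finrank ℚ (Fin r → ℚ) := by
    simp [Module.finrank_fin_fun]
  set bA := basisOfTopLeSpanOfCardEqFinrank A' hspan hcard with hbAdef
  have hbA : ⇑bA = A' := coe_basisOfTopLeSpanOfCardEqFinrank A' hspan hcard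
  set fl : (Fin r → ℚ) →ₗ[ℚ] ℚ := ∑ m, bA.coord m with hfl
  have hfl1 : ∀ m, fl (A' m) = 1 := by
    intro m
    rw [← hbA, hfl]
    rw [LinearMap.sum_apply]
    simp only [Module.Basis.coord_apply, Module.Basis.repr_self]
    simp [Finsupp.single_apply]
  refine ⟨AddMonoidHom.mk' (fun x => fl (fun j => (x j : ℚ))) ?_, ?_, ?_⟩
  · intro x y
    have h3 : (fun j => ((x + y) j : ℚ)) = (fun j => (x j : ℚ)) + (fun j => (y j : ℚ)) := by
      funext j; push_cast; simp
    show fl (fun j => ((x + y) j : ℚ)) = fl (fun j => (x j : ℚ)) + fl (fun j => (y j : ℚ))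
    rw [h3, map_add]
  · intro m
    show fl (fun j => (a m j : ℚ)) = 1
    exact hfl1 m
  · intro i
    show 0 < fl (fun j => ((Pi.single i 1 : Fin r → ℤ) j : ℚ))
    rw [hcast i]
    obtain ⟨N, d, hN, hD, hEq⟩ := hkey i
    have h1 : (N : ℚ) * fl (Pi.single i 1) = ∑ m, (d m : ℚ) := by
      calc (N : ℚ) * fl (Pi.single i 1) = fl ((N : ℚ) • (Pi.single i 1 : Fin r → ℚ)) := by
            rw [map_smul]; simp
        _ = fl (∑ m, (d m : ℚ) • A' m) := by rw [hEq]
        _ = ∑ m, (d m : ℚ) * fl (A' m) := by rw [map_sum]; simp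
        _ = ∑ m, (d m : ℚ) := by simp [hfl1]
    have hNq : (0 : ℚ) < N := by exact_mod_cast hN
    have hDq : (0 : ℚ) < ∑ m, (d m : ℚ) := by
      have : (0 : ℚ) < ((∑ m, d m : ℕ) : ℚ) := by exact_mod_cast hD
      rwa [Nat.cast_sum] at this
    nlinarith [h1]


end Stmt6Aux

open Stmt6Aux in
/-- Steinberg: For a split semisimple simply connected group `G` of rank `r`
over a field `k`, with split maximal torus `T` and Weyl group `W`, the fundamental
characters `b₁,…,b_r` are algebraically independent over `k`, and `T/W ≅ Spec k[b₁,…,b_r]`,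
i.e. the invariant ring `k[T]^W` is the polynomial ring on the `b_i`.

`k[T]` is the group algebra of the character lattice `ℤ^r` (written in fundamental-weight
coordinates); `W ≤ Aut(ℤ^r)` is the group generated by the simple reflections
`s_j(λ) = λ − λ_j α_j`; `b_i` is the character of the fundamental representation, a sum of
its weights with multiplicities `wt i`, which are `W`-invariant with highest weight `μ_i`
of multiplicity one. -/
theorem stmt_6
    (k : Type*) [Field k]
    (r : ℕ)
    (a : Fin r → (Fin r → ℤ))          -- the simple roots, in fundamental-weight coordinates
    (ha : ∀ i, a i i = 2)
    (s : Fin r → AddAut (Fin r → ℤ))   -- the simple reflections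
    (hs : ∀ (j : Fin r) (lam : Fin r → ℤ), s j lam = lam - lam j • a j)
    (W : AddSubgroup (AddAut (Fin r → ℤ)))           -- the Weyl group
    (hW : W = AddSubgroup.closure (Set.range s))
    (wt : Fin r → ((Fin r → ℤ) →₀ ℕ))  -- the weights with multiplicities of ρ_{μ_i}
    -- W-invariance of the weights with multiplicities
    (hinv : ∀ g ∈ W, ∀ (i : Fin r) (lam : Fin r → ℤ), wt i (g lam) = wt i lam)
    -- the highest weight of ρ_{μ_i} is the fundamental weight μ_i, with multiplicity one
    (hhw : ∀ i, wt i (Pi.single i 1) = 1)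
    (hhw' : ∀ (i : Fin r) (lam : Fin r → ℤ), wt i lam ≠ 0 →
        ∃ c : Fin r → ℕ, ∀ j, (Pi.single i 1 : Fin r → ℤ) j - lam j = ∑ m, (c m : ℤ) * a m j)
    -- the fundamental characters b_i ∈ k[T]
    (b : Fin r → AddMonoidAlgebra k (Fin r → ℤ))
    (hb : ∀ i, b i = (wt i).sum fun lam mult => AddMonoidAlgebra.single lam (mult : k)) :
    AlgebraicIndependent k b ∧
      ∀ x : AddMonoidAlgebra k (Fin r → ℤ),
        x ∈ Algebra.adjoin k (Set.range b) ↔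
          ∀ g ∈ W, AddMonoidAlgebra.domCongr k k ((g : AddAut (Fin r → ℤ)) : (Fin r → ℤ) ≃+ (Fin r → ℤ)) x = x := by
  classical
  obtain ⟨f, hfa, hfe⟩ := Stmt6Aux.exists_functional a
    (fun i => Stmt6Aux.exists_d a ha s hs W hW wt hinv hhw hhw' i)
  have hsW : ∀ j, s j ∈ W := fun j => hW ▸ AddSubgroup.subset_closure ⟨j, rfl⟩
  -- coefficients of b
  have bcoeff : ∀ (i : Fin r) (lam : Fin r → ℤ), (b i).coeff lam = (wt i lam : k) := by
    intro i lam
    rw [hb i]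
    show (∑ l ∈ (wt i).support, AddMonoidAlgebra.single l ((wt i l : k))).coeff lam = _
    rw [AddMonoidAlgebra.coeff_sum, Finset.sum_apply']
    have : ∀ l ∈ (wt i).support, (AddMonoidAlgebra.single l ((wt i l : k))).coeff lam
        = if l = lam then (wt i l : k) else 0 := by
      intro l _
      exact Finsupp.single_apply
    rw [Finset.sum_congr rfl this, Finset.sum_ite_eq' (wt i).support lam (fun l => (wt i l : k))]
    by_cases hmem : lam ∈ (wt i).support
    · rw [if_pos hmem]
    · rw [if_neg hmem, Finsupp.notMem_support_iff.mp hmem, Nat.cast_zero]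
  -- f on reflections
  have hfs : ∀ (j : Fin r) (lam : Fin r → ℤ), f (s j lam) = f lam - (lam j : ℚ) := by
    intro j lam
    rw [hs j lam, map_sub, map_zsmul, zsmul_eq_mul, hfa j, mul_one]
  -- decomposition of f
  have hflam : ∀ lam : Fin r → ℤ, f lam = ∑ j, (lam j : ℚ) * f (Pi.single j 1) := by
    intro lam
    have hdec : lam = ∑ j, lam j • (Pi.single j 1 : Fin r → ℤ) := by
      funext j'
      rw [Finset.sum_apply]
      rw [Finset.sum_eq_single j']
      · simp
      · intro m _ hm; simp [Pi.single_eq_of_ne (Ne.symm hm)]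
      · intro h; exact absurd (Finset.mem_univ j') h
    conv_lhs => rw [hdec]
    rw [map_sum]
    apply Finset.sum_congr rfl
    intro j _
    rw [map_zsmul, zsmul_eq_mul]
  -- b i is led by the fundamental weight
  have hbLed : ∀ i, Led f (b i) (Pi.single i 1) := by
    intro i
    constructor
    · rw [bcoeff i, hhw i, Nat.cast_one]
    · intro lam hlam
      have hwt : wt i lam ≠ 0 := by
        intro h0
        rw [bcoeff i, h0, Nat.cast_zero] at hlam
        exact hlam rfl
      obtain ⟨c, hc⟩ := hhw' i lam hwt
      have hdiff : (Pi.single i 1 : Fin r → ℤ) - lam = ∑ m, (c m : ℤ) • a m := by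
        funext j
        rw [Pi.sub_apply, hc j, Finset.sum_apply]
        apply Finset.sum_congr rfl
        intro m _
        rw [Pi.smul_apply, smul_eq_mul]
      have hfd : f (Pi.single i 1) - f lam = ∑ m, (c m : ℚ) := by
        rw [← map_sub, hdiff, map_sum]
        apply Finset.sum_congr rfl
        intro m _
        rw [map_zsmul, zsmul_eq_mul, hfa m, mul_one]
        push_cast
        ring
      have hnn : (0:ℚ) ≤ ∑ m, (c m : ℚ) := Finset.sum_nonneg fun m _ => by positivity
      constructor
      · linarith
      · intro heq
        have hz : ∑ m, (c m : ℚ) = 0 := by linarith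
        have hcz : ∀ m, (c m : ℚ) = 0 := by
          intro m
          have := (Finset.sum_eq_zero_iff_of_nonneg (fun m _ => by positivity)).mp hz m
            (Finset.mem_univ m)
          exact this
        have : (Pi.single i 1 : Fin r → ℤ) - lam = 0 := by
          rw [hdiff]
          apply Finset.sum_eq_zero
          intro m _
          have : c m = 0 := by exact_mod_cast hcz m
          rw [this]
          simp
        have := sub_eq_zero.mp this
        exact this.symm
  -- the monomials
  set B : (Fin r → ℕ) → AddMonoidAlgebra k (Fin r → ℤ) := fun c => ∏ i, b i ^ c i with hBdef
  set cofn : (Fin r → ℕ) → (Fin r → ℤ) := fun c j => (c j : ℤ) with hcofndef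
  have hsum_cofn : ∀ c : Fin r → ℕ, ∑ i, (c i) • (Pi.single i 1 : Fin r → ℤ) = cofn c := by
    intro c
    funext j
    rw [Finset.sum_apply]
    rw [Finset.sum_eq_single j]
    · simp [hcofndef]
    · intro m _ hm; simp [Pi.single_eq_of_ne (Ne.symm hm)]
    · intro h; exact absurd (Finset.mem_univ j) h
  have hBLed : ∀ c, Led f (B c) (cofn c) := by
    intro c
    rw [← hsum_cofn c, hBdef]
    exact Led.prod f Finset.univ _ _ (fun i _ => (hbLed i).pow f (c i))
  have hBadj : ∀ c, B c ∈ Algebra.adjoin k (Set.range b) := by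
    intro c
    exact Subalgebra.prod_mem _ fun i _ =>
      Subalgebra.pow_mem _ (Algebra.subset_adjoin (Set.mem_range_self i)) _
  -- invariance of the b i and the monomials
  have hbinvW : ∀ g ∈ W, ∀ i, AddMonoidAlgebra.domCongr k k
      ((g : AddAut (Fin r → ℤ)) : (Fin r → ℤ) ≃+ (Fin r → ℤ)) (b i) = b i := by
    intro g hg i
    refine AddMonoidAlgebra.ext (Finsupp.ext ?_)
    intro lam
    rw [AddMonoidAlgebra.coeff_domCongr, bcoeff i, bcoeff i]
    have h4 : (AddEquiv.symm ((g : AddAut (Fin r → ℤ)) : (Fin r → ℤ) ≃+ (Fin r → ℤ))) lam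
        = (-g : AddAut (Fin r → ℤ)) lam := rfl
    rw [h4]
    have h5 := hinv (-g) (neg_mem hg) i lam
    rw [h5]
  have hBinvW : ∀ g ∈ W, ∀ c, AddMonoidAlgebra.domCongr k k
      ((g : AddAut (Fin r → ℤ)) : (Fin r → ℤ) ≃+ (Fin r → ℤ)) (B c) = B c := by
    intro g hg c
    rw [hBdef]
    rw [map_prod]
    apply Finset.prod_congr rfl
    intro i _
    rw [map_pow, hbinvW g hg i]
  have hBinvC : ∀ (c : Fin r → ℕ) (j : Fin r) (lam : Fin r → ℤ),
      (B c).coeff (s j lam) = (B c).coeff lam := by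
    intro c j lam
    have h := hBinvW (s j) (hsW j) c
    have h2 := Finsupp.ext_iff.mp (congrArg AddMonoidAlgebra.coeff h) ((s j) lam)
    rw [AddMonoidAlgebra.coeff_domCongr] at h2
    rw [← h2]
    congr 1
    exact AddEquiv.symm_apply_apply _ _
  constructor
  · -- algebraic independence
    rw [algebraicIndependent_iff]
    intro p hp
    by_contra hp0
    have hne : p.support.Nonempty := MvPolynomial.support_nonempty.mpr hp0
    obtain ⟨d0, hd0, hd0max⟩ := Finset.exists_max_image p.support (fun d => f (cofn ⇑d)) hne
    have heval : (MvPolynomial.aeval b p).coeff (cofn ⇑d0) = 0 := by rw [hp]; rfl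
    rw [MvPolynomial.aeval_def, MvPolynomial.eval₂_eq'] at heval
    rw [AddMonoidAlgebra.coeff_sum, Finset.sum_apply'] at heval
    have hterm : ∀ d ∈ p.support,
        (algebraMap k (AddMonoidAlgebra k (Fin r → ℤ)) (MvPolynomial.coeff d p) * ∏ i, b i ^ d i).coeff
          (cofn ⇑d0)
        = MvPolynomial.coeff d p * (B ⇑d).coeff (cofn ⇑d0) := by
      intro d _
      rw [← Algebra.smul_def, AddMonoidAlgebra.coeff_smul, Finsupp.smul_apply, smul_eq_mul, hBdef]
    rw [Finset.sum_congr rfl hterm] at heval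
    rw [Finset.sum_eq_single d0] at heval
    · rw [(hBLed ⇑d0).1, mul_one] at heval
      exact (MvPolynomial.mem_support_iff.mp hd0) heval
    · intro d hd hdne
      by_cases hz : (B ⇑d).coeff (cofn ⇑d0) = 0
      · rw [hz, mul_zero]
      · exfalso
        have h1 := ((hBLed ⇑d).2 (cofn ⇑d0) hz).1
        have h2 := hd0max d hd
        have h3 := ((hBLed ⇑d).2 (cofn ⇑d0) hz).2 (le_antisymm h1 h2)
        have h4 : ⇑d0 = ⇑d := by
          funext j
          have h5 := congrFun h3 j
          have h6 : ((d0 j : ℤ)) = ((d j : ℤ)) := h5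
          exact_mod_cast h6
        exact hdne (Finsupp.ext fun j => congrFun h4.symm j)
    · intro h
      exact absurd hd0 h
  · intro x
    constructor
    · -- adjoin → invariant
      intro hx g hg
      have hle : Algebra.adjoin k (Set.range b) ≤
          AlgHom.equalizer ((AddMonoidAlgebra.domCongr k k
            ((g : AddAut (Fin r → ℤ)) : (Fin r → ℤ) ≃+ (Fin r → ℤ))).toAlgHom)
            (AlgHom.id k _) := by
        apply Algebra.adjoin_le
        rintro _ ⟨i, rfl⟩
        exact hbinvW g hg i
      exact hle hx
    · -- invariant → adjoin
      intro hx
      have hxinv : ∀ (j : Fin r) (lam : Fin r → ℤ), x.coeff (s j lam) = x.coeff lam := by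
        intro j lam
        have h := hx (s j) (hsW j)
        have h2 := Finsupp.ext_iff.mp (congrArg AddMonoidAlgebra.coeff h) ((s j) lam)
        rw [AddMonoidAlgebra.coeff_domCongr] at h2
        rw [← h2]
        congr 1
        exact AddEquiv.symm_apply_apply _ _
      by_cases hx0 : x = 0
      · rw [hx0]; exact Subalgebra.zero_mem _
      obtain ⟨l0, hl0mem, hl0max⟩ := Finset.exists_max_image x.coeff.support (fun l => f l)
        (Finsupp.support_nonempty_iff.mpr (mt AddMonoidAlgebra.coeff_eq_zero.mp hx0))
      set M₀ := f l0 with hM₀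
      set Bd : Fin r → ℕ := fun j => ⌊M₀ / f (Pi.single j 1)⌋₊ with hBd
      set K : Finset (Fin r → ℕ) := Fintype.piFinset fun j => Finset.range (Bd j + 1) with hK
      set Gset : Finset (Fin r → ℤ) := x.coeff.support ∪ K.biUnion (fun c => (B c).coeff.support) with hGset
      have hGkey : ∀ lam : Fin r → ℤ, (∀ j, 0 ≤ lam j) → f lam ≤ M₀ →
          (B (fun i => (lam i).toNat)).coeff.support ⊆ Gset := by
        intro lam hdom hle
        have hmemK : (fun i => (lam i).toNat) ∈ K := by
          rw [hK, Fintype.mem_piFinset]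
          intro j
          rw [Finset.mem_range, Nat.lt_succ_iff]
          apply Nat.le_floor
          have hterm : (lam j : ℚ) * f (Pi.single j 1) ≤ M₀ := by
            have h1 : f lam = ∑ j', (lam j' : ℚ) * f (Pi.single j' 1) := hflam lam
            have h2 : (lam j : ℚ) * f (Pi.single j 1) ≤ f lam := by
              rw [h1]
              apply Finset.single_le_sum (f := fun j' => (lam j' : ℚ) * f (Pi.single j' 1))
              · intro j' _
                have hd' : (0:ℚ) ≤ (lam j' : ℚ) := by exact_mod_cast hdom j'
                exact mul_nonneg hd' (hfe j').le
              · exact Finset.mem_univ j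
            linarith
          have hcst : ((lam j).toNat : ℚ) = (lam j : ℚ) := by
            rw [← Int.cast_natCast, Int.toNat_of_nonneg (hdom j)]
          rw [hcst, le_div_iff₀ (hfe j)]
          exact hterm
        intro z hz
        rw [hGset]
        exact Finset.mem_union_right _ (Finset.mem_biUnion.mpr ⟨_, hmemK, hz⟩)
      have key : ∀ (n : ℕ) (y : AddMonoidAlgebra k (Fin r → ℤ)),
          (∀ (j : Fin r) (lam : Fin r → ℤ), y.coeff (s j lam) = y.coeff lam) →
          y.coeff.support ⊆ Gset →
          (∀ l ∈ y.coeff.support, f l ≤ M₀) →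
          (Gset.filter fun l => ∃ m ∈ y.coeff.support, f l ≤ f m).card ≤ n →
          y ∈ Algebra.adjoin k (Set.range b) := by
        intro n
        induction n using Nat.strong_induction_on with
        | _ n IH =>
        intro y hyinv hysup hybdd hycard
        by_cases hy0 : y = 0
        · rw [hy0]; exact Subalgebra.zero_mem _
        obtain ⟨lst, hlstmem, hlstmax⟩ := Finset.exists_max_image y.coeff.support (fun l => f l)
          (Finsupp.support_nonempty_iff.mpr (mt AddMonoidAlgebra.coeff_eq_zero.mp hy0))
        set M := f lst with hM
        have hMM₀ : M ≤ M₀ := hybdd lst hlstmem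
        set Smax := y.coeff.support.filter (fun mu => f mu = M) with hSmax
        have hdomS : ∀ mu ∈ Smax, ∀ j, 0 ≤ mu j := by
          intro mu hmu j
          rw [hSmax, Finset.mem_filter] at hmu
          have hs1 : y.coeff (s j mu) ≠ 0 := by
            rw [hyinv j mu]; exact Finsupp.mem_support_iff.mp hmu.1
          have hs2 : f (s j mu) ≤ M := hlstmax _ (Finsupp.mem_support_iff.mpr hs1)
          rw [hfs j mu, hmu.2] at hs2
          have : (0:ℚ) ≤ (mu j : ℚ) := by linarith
          exact_mod_cast this
        have hcofn2 : ∀ mu ∈ Smax, cofn (fun i => (mu i).toNat) = mu := by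
          intro mu hmu
          funext j
          show (((mu j).toNat : ℕ) : ℤ) = mu j
          exact Int.toNat_of_nonneg (hdomS mu hmu j)
        set y' := y - ∑ mu ∈ Smax, y.coeff mu • B (fun i => (mu i).toNat) with hy'
        have happ : ∀ lam, y'.coeff lam
            = y.coeff lam - ∑ mu ∈ Smax, y.coeff mu * (B (fun i => (mu i).toNat)).coeff lam := by
          intro lam
          rw [hy', AddMonoidAlgebra.coeff_sub, Finsupp.sub_apply, AddMonoidAlgebra.coeff_sum, Finset.sum_apply']
          have hp : ∀ mu ∈ Smax, (y.coeff mu • B (fun i => (mu i).toNat)).coeff lam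
              = y.coeff mu * (B (fun i => (mu i).toNat)).coeff lam :=
            fun mu _ => by rw [AddMonoidAlgebra.coeff_smul, Finsupp.smul_apply, smul_eq_mul]
          rw [Finset.sum_congr rfl hp]
        have hBmuLed : ∀ mu ∈ Smax, Led f (B (fun i => (mu i).toNat)) mu := by
          intro mu hmu
          have := hBLed (fun i => (mu i).toNat)
          rwa [hcofn2 mu hmu] at this
        have hy'lt : ∀ lam, y'.coeff lam ≠ 0 → f lam < M := by
          intro lam hne
          by_contra hge
          push_neg at hge
          apply hne
          rw [happ lam]
          rcases lt_or_eq_of_le hge with hgt | heq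
          · have hy1 : y.coeff lam = 0 := by
              by_contra h0
              have := hlstmax lam (Finsupp.mem_support_iff.mpr h0)
              linarith
            have hsum : ∀ mu ∈ Smax, y.coeff mu * (B (fun i => (mu i).toNat)).coeff lam = 0 := by
              intro mu hmu
              rcases eq_or_ne ((B (fun i => (mu i).toNat)).coeff lam) 0 with h | h
              · rw [h, mul_zero]
              · exfalso
                have h1 := ((hBmuLed mu hmu).2 lam h).1
                have hfmu : f mu = M := (Finset.mem_filter.mp hmu).2
                linarith
            rw [hy1, Finset.sum_eq_zero hsum, sub_zero]
          · by_cases hls : lam ∈ Smax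
            · rw [Finset.sum_eq_single lam]
              · rw [(hBmuLed lam hls).1, mul_one, sub_self]
              · intro mu hmu hmune
                rcases eq_or_ne ((B (fun i => (mu i).toNat)).coeff lam) 0 with h | h
                · rw [h, mul_zero]
                · exfalso
                  have h1 := (hBmuLed mu hmu).2 lam h
                  have hfmu : f mu = M := (Finset.mem_filter.mp hmu).2
                  have hlm : lam = mu := h1.2 (by rw [hfmu, ← heq])
                  exact hmune hlm.symm
              · intro h; exact absurd hls h
            · have hy1 : y.coeff lam = 0 := by
                by_contra h0
                exact hls (Finset.mem_filter.mpr ⟨Finsupp.mem_support_iff.mpr h0, heq.symm⟩)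
              have hsum : ∀ mu ∈ Smax, y.coeff mu * (B (fun i => (mu i).toNat)).coeff lam = 0 := by
                intro mu hmu
                rcases eq_or_ne ((B (fun i => (mu i).toNat)).coeff lam) 0 with h | h
                · rw [h, mul_zero]
                · exfalso
                  have h1 := (hBmuLed mu hmu).2 lam h
                  have hfmu : f mu = M := (Finset.mem_filter.mp hmu).2
                  have hlm : lam = mu := h1.2 (by rw [hfmu, ← heq])
                  rw [hlm] at hls
                  exact hls hmu
              rw [hy1, Finset.sum_eq_zero hsum, sub_zero]
        have hy'sup : y'.coeff.support ⊆ Gset := by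
          intro lam hlam
          have hne := Finsupp.mem_support_iff.mp hlam
          by_cases h0 : y.coeff lam = 0
          · have hsne : ∑ mu ∈ Smax, y.coeff mu * (B (fun i => (mu i).toNat)).coeff lam ≠ 0 := by
              intro h
              apply hne
              rw [happ lam, h0, h, sub_zero]
            obtain ⟨mu, hmu, hterm⟩ := Finset.exists_ne_zero_of_sum_ne_zero hsne
            have hBne : (B (fun i => (mu i).toNat)).coeff lam ≠ 0 := right_ne_zero_of_mul hterm
            have hfmu : f mu = M := (Finset.mem_filter.mp hmu).2
            exact hGkey mu (hdomS mu hmu) (by rw [hfmu]; exact hMM₀)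
              (Finsupp.mem_support_iff.mpr hBne)
          · exact hysup (Finsupp.mem_support_iff.mpr h0)
        have hy'inv : ∀ (j : Fin r) (lam : Fin r → ℤ), y'.coeff (s j lam) = y'.coeff lam := by
          intro j lam
          rw [happ, happ, hyinv j lam]
          congr 1
          apply Finset.sum_congr rfl
          intro mu _
          rw [hBinvC (fun i => (mu i).toNat) j lam]
        have hy'bdd : ∀ l ∈ y'.coeff.support, f l ≤ M₀ := by
          intro l hl
          have := hy'lt l (Finsupp.mem_support_iff.mp hl)
          linarith
        have hsub : (Gset.filter fun l => ∃ m ∈ y'.coeff.support, f l ≤ f m)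
            ⊆ (Gset.filter fun l => ∃ m ∈ y.coeff.support, f l ≤ f m) := by
          intro l hl
          rw [Finset.mem_filter] at hl ⊢
          obtain ⟨hlG, m, hm, hlm⟩ := hl
          refine ⟨hlG, lst, hlstmem, ?_⟩
          have := hy'lt m (Finsupp.mem_support_iff.mp hm)
          linarith
        have hssub : (Gset.filter fun l => ∃ m ∈ y'.coeff.support, f l ≤ f m)
            ⊂ (Gset.filter fun l => ∃ m ∈ y.coeff.support, f l ≤ f m) := by
          refine (Finset.ssubset_iff_of_subset hsub).mpr ⟨lst, ?_, ?_⟩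
          · exact Finset.mem_filter.mpr ⟨hysup hlstmem, lst, hlstmem, le_rfl⟩
          · intro hmem
            rw [Finset.mem_filter] at hmem
            obtain ⟨-, m, hm, hlem⟩ := hmem
            have := hy'lt m (Finsupp.mem_support_iff.mp hm)
            linarith
        have hy'adj : y' ∈ Algebra.adjoin k (Set.range b) :=
          IH _ (lt_of_lt_of_le (Finset.card_lt_card hssub) hycard) y' hy'inv hy'sup hy'bdd le_rfl
        have hyeq : y = y' + ∑ mu ∈ Smax, y.coeff mu • B (fun i => (mu i).toNat) := by
          rw [hy']; ring
        rw [hyeq]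
        exact Subalgebra.add_mem _ hy'adj (Subalgebra.sum_mem _ fun mu _ =>
          Subalgebra.smul_mem _ (hBadj _) _)
      refine key _ x hxinv ?_ (fun l hl => hl0max l hl) le_rfl
      rw [hGset]
      exact Finset.subset_union_left
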